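/- Let p > 1 and let ρ(ζ) = exp(e^{2ζ}/4 − ((p+3)/(p−1))ζ), with weighted measure dμ = ρ(ζ)dζ on ℝ. Let w : ℝ → ℝ be continuously differentiable with ∫_ℝ w(ζ)² dμ(ζ) < ∞ and ∫_ℝ w'(ζ)² dμ(ζ) < ∞. Then there exists R₀' < 0 such that for all R ≤ R₀': ρ(R) · w(R)² ≤ 8((p−1)/(p+3)) ∫_{−∞}^R w'(ζ)² dμ(ζ). -/

import Mathlib

open Real Set Filter MeasureTheory

/-- pointwise weighted trace estimate at `−∞` for the weight
`ρ(ζ) = exp(e^{2ζ}/4 − ((p+3)/(p−1))ζ)`: for `w ∈ H¹(ℝ, dμ)`, there is `R₀' < 0` such that for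
all `R ≤ R₀'`, `ρ(R) w(R)² ≤ 8((p−1)/(p+3)) ∫_{−∞}^R (w')² dμ`. -/
theorem stmt_6 (p : ℝ) (hp : 1 < p)
    (ρ : ℝ → ℝ)
    (hρ : ∀ ζ, ρ ζ = Real.exp (Real.exp (2 * ζ) / 4 - ((p + 3) / (p - 1)) * ζ))
    (w : ℝ → ℝ) (hw : ContDiff ℝ 1 w)
    (hw2 : Integrable (fun ζ => (w ζ) ^ 2 * ρ ζ))
    (hw2' : Integrable (fun ζ => (deriv w ζ) ^ 2 * ρ ζ)) :
    ∃ R₀' < 0, ∀ R ≤ R₀',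
      ρ R * (w R) ^ 2 ≤ 8 * ((p - 1) / (p + 3)) * ∫ ζ in Iic R, (deriv w ζ) ^ 2 * ρ ζ := by
  have hρfun : ρ = fun ζ => Real.exp (Real.exp (2 * ζ) / 4 - ((p + 3) / (p - 1)) * ζ) :=
    funext hρ
  subst hρfun
  set α : ℝ := (p + 3) / (p - 1) with hαdef
  have hp1 : (0:ℝ) < p - 1 := by linarith
  have hα1 : 1 < α := by
    rw [hαdef, lt_div_iff₀ hp1]; linarith
  have hα0 : (0:ℝ) < α := by linarith
  -- basic continuity facts
  have hρcont : Continuous (fun ζ : ℝ => Real.exp (Real.exp (2 * ζ) / 4 - α * ζ)) := by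
    fun_prop
  have hρpos : ∀ ζ : ℝ, 0 < Real.exp (Real.exp (2 * ζ) / 4 - α * ζ) := fun ζ => Real.exp_pos _
  have hwd : ∀ ζ : ℝ, HasDerivAt w (deriv w ζ) ζ := fun ζ =>
    (hw.differentiable one_ne_zero ζ).hasDerivAt
  have hwc : Continuous w := hw.continuous
  have hw'c : Continuous (deriv w) := hw.continuous_deriv le_rfl
  -- derivative of the weight
  have hρd : ∀ ζ : ℝ, HasDerivAt (fun x : ℝ => Real.exp (Real.exp (2 * x) / 4 - α * x))
      ((Real.exp (2 * ζ) / 2 - α) * Real.exp (Real.exp (2 * ζ) / 4 - α * ζ)) ζ := by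
    intro ζ
    have h1 : HasDerivAt (fun x : ℝ => Real.exp (2 * x)) (Real.exp (2 * ζ) * 2) ζ := by
      exact ((Real.hasDerivAt_exp (2 * ζ)).comp ζ ((hasDerivAt_id ζ).const_mul 2)).congr_deriv (by simp)
    have h2 : HasDerivAt (fun x : ℝ => Real.exp (2 * x) / 4 - α * x)
        (Real.exp (2 * ζ) * 2 / 4 - α) ζ := by
      exact ((h1.div_const 4).sub ((hasDerivAt_id ζ).const_mul α)).congr_deriv (by simp)
    have h3 := h2.exp
    convert h3 using 1
    ring
  -- the function g = ρ w² and its derivative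
  set g : ℝ → ℝ := fun ζ => Real.exp (Real.exp (2 * ζ) / 4 - α * ζ) * w ζ ^ 2 with hgdef
  set g' : ℝ → ℝ := fun ζ =>
    (Real.exp (2 * ζ) / 2 - α) * Real.exp (Real.exp (2 * ζ) / 4 - α * ζ) * w ζ ^ 2 +
      Real.exp (Real.exp (2 * ζ) / 4 - α * ζ) * (2 * w ζ * deriv w ζ) with hg'def
  have hgd : ∀ ζ : ℝ, HasDerivAt g (g' ζ) ζ := by
    intro ζ
    have hsq : HasDerivAt (fun x => w x ^ 2) (2 * w ζ * deriv w ζ) ζ := by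
      exact ((hwd ζ).pow 2).congr_deriv (by simp [mul_comm, mul_assoc])
    exact (hρd ζ).mul hsq
  have hg'cont : Continuous g' := by
    rw [hg'def]; fun_prop
  have hgcont : Continuous g := by rw [hgdef]; fun_prop
  have hgint : Integrable g := by
    apply hw2.congr
    filter_upwards with ζ
    simp [hgdef, mul_comm]
  -- nonnegativity of the key integrand
  have hInt_nonneg : ∀ ζ : ℝ, 0 ≤ (deriv w ζ) ^ 2 * Real.exp (Real.exp (2 * ζ) / 4 - α * ζ) :=
    fun ζ => mul_nonneg (sq_nonneg _) (Real.exp_pos _).le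
  refine ⟨-1, by norm_num, ?_⟩
  intro R hR
  set I : ℝ := ∫ ζ in Iic R, (deriv w ζ) ^ 2 * Real.exp (Real.exp (2 * ζ) / 4 - α * ζ) with hIdef
  have hIOn : IntegrableOn (fun ζ => (deriv w ζ) ^ 2 * Real.exp (Real.exp (2 * ζ) / 4 - α * ζ))
      (Iic R) volume := hw2'.integrableOn
  have hInonneg : 0 ≤ I := by
    apply setIntegral_nonneg measurableSet_Iic
    intro ζ _; exact hInt_nonneg ζ
  -- pointwise bound on g' for ζ ≤ R ≤ -1
  have hg'bound : ∀ ζ : ℝ, ζ ≤ R →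
      g' ζ ≤ 4 / α * ((deriv w ζ) ^ 2 * Real.exp (Real.exp (2 * ζ) / 4 - α * ζ)) := by
    intro ζ hζ
    set r : ℝ := Real.exp (Real.exp (2 * ζ) / 4 - α * ζ) with hrdef
    have hr : (0:ℝ) < r := Real.exp_pos _
    set a : ℝ := w ζ
    set b : ℝ := deriv w ζ
    have he : Real.exp (2 * ζ) ≤ 1 := Real.exp_le_one_iff.mpr (by linarith)
    have hkey : 2 * a * b ≤ α / 4 * a ^ 2 + 4 / α * b ^ 2 := by
      have h2' : 2 * a * b * α ≤ (α / 4 * a ^ 2 + 4 / α * b ^ 2) * α := by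
        have hb : 4 / α * b ^ 2 * α = 4 * b ^ 2 := by field_simp
        nlinarith [sq_nonneg (α * a / 2 - 2 * b)]
      exact le_of_mul_le_mul_right h2' hα0
    have h2 : r * (2 * a * b) ≤ r * (α / 4 * a ^ 2 + 4 / α * b ^ 2) :=
      mul_le_mul_of_nonneg_left hkey hr.le
    have h4 : 0 ≤ r * a ^ 2 := mul_nonneg hr.le (sq_nonneg _)
    have h5 : 0 ≤ (3 * α / 4 - Real.exp (2 * ζ) / 2) * (r * a ^ 2) :=
      mul_nonneg (by linarith) h4
    show (Real.exp (2 * ζ) / 2 - α) * r * a ^ 2 + r * (2 * a * b) ≤ 4 / α * (b ^ 2 * r)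
    nlinarith [h2, h5]
  -- FTC + comparison: for any S ≤ R, g R ≤ g S + (4/α) * I
  have hmain : ∀ S : ℝ, S ≤ R → g R ≤ g S + 4 / α * I := by
    intro S hS
    have hftc : ∫ t in S..R, g' t = g R - g S := by
      apply intervalIntegral.integral_eq_sub_of_hasDerivAt (fun x _ => hgd x)
      exact hg'cont.intervalIntegrable S R
    have hmono : ∫ t in S..R, g' t ≤
        ∫ t in S..R, 4 / α * ((deriv w t) ^ 2 * Real.exp (Real.exp (2 * t) / 4 - α * t)) := by
      apply intervalIntegral.integral_mono_on hS (hg'cont.intervalIntegrable S R)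
        ((continuous_const.mul (by fun_prop)).intervalIntegrable S R)
      intro x hx
      exact hg'bound x hx.2
    have hsub : ∫ t in S..R, 4 / α * ((deriv w t) ^ 2 * Real.exp (Real.exp (2 * t) / 4 - α * t))
        ≤ 4 / α * I := by
      rw [intervalIntegral.integral_const_mul]
      apply mul_le_mul_of_nonneg_left _ (by positivity : (0:ℝ) ≤ 4 / α)
      rw [intervalIntegral.integral_of_le hS]
      apply setIntegral_mono_set hIOn
      · filter_upwards with ζ using hInt_nonneg ζ
      · filter_upwards with ζ using fun hζ => hζ.2
    linarith [hftc ▸ hmono, hsub]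
  -- find S with g S arbitrarily small
  have hsmall : ∀ ε : ℝ, 0 < ε → ∃ S ≤ R, g S < ε := by
    intro ε hε
    by_contra h
    push_neg at h
    have hεOn : IntegrableOn (fun _ : ℝ => ε) (Iic R) volume := by
      apply Integrable.mono' hgint.integrableOn aestronglyMeasurable_const
      filter_upwards [ae_restrict_mem measurableSet_Iic] with x hx
      rw [Real.norm_eq_abs, abs_of_pos hε]
      exact h x hx
    have := integrable_const_iff.mp hεOn
    rcases this with h0 | hfin
    · exact absurd h0 hε.ne'
    · rw [isFiniteMeasure_restrict, Real.volume_Iic] at hfin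
      exact absurd hfin (by simp)
  -- conclude
  have hgR : g R ≤ 4 / α * I := by
    refine le_of_forall_pos_le_add ?_
    intro ε hε
    obtain ⟨S, hS, hgS⟩ := hsmall ε hε
    have := hmain S hS
    linarith
  have hconst : 4 / α * I ≤ 8 * ((p - 1) / (p + 3)) * I := by
    apply mul_le_mul_of_nonneg_right _ hInonneg
    rw [hαdef, div_div_eq_mul_div, mul_div_assoc]
    exact mul_le_mul_of_nonneg_right (by norm_num)
      (div_nonneg (by linarith) (by linarith))
  calc Real.exp (Real.exp (2 * R) / 4 - α * R) * w R ^ 2 = g R := rfl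
    _ ≤ 4 / α * I := hgR
    _ ≤ 8 * ((p - 1) / (p + 3)) * I := hconst
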